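/- Define p̃(ρ,S) := p(ρ, ρ^{γ−1} exp((γ−1) S/(c_V ρ))) = ρ^γ exp((γ−1)S/(c_V ρ)) for ρ>0, S∈ℝ, where p(ρ,θ)=ρθ, γ>1 and c_V(γ−1)=1. Then p̃ is a convex function of (ρ,S) on (0,∞)×ℝ. -/

import Mathlib

/-- The pressure in conservative variables, `p̃(ρ,S) = ρ^γ exp((γ-1) S/(cV ρ))`,
is a convex function of `(ρ,S)` on `(0,∞) × ℝ`. -/
theorem pressure_convex_in_conservative_variables (γ cV : ℝ) (hγ : 1 < γ) (hcV : 0 < cV)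
    (hrel : cV * (γ - 1) = 1) :
    ConvexOn ℝ (Set.Ioi (0 : ℝ) ×ˢ (Set.univ : Set ℝ))
      (fun q : ℝ × ℝ => q.1 ^ γ * Real.exp ((γ - 1) * q.2 / (cV * q.1))) := by
  have hγ0 : (0:ℝ) < γ := by linarith
  set h : ℝ × ℝ → ℝ := fun q => q.1 * Real.exp ((γ - 1) * q.2 / (cV * q.1) / γ) with hh
  have hconvs : Convex ℝ (Set.Ioi (0 : ℝ) ×ˢ (Set.univ : Set ℝ)) :=
    (convex_Ioi 0).prod convex_univ
  -- h is convex on the set (perspective function)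
  have hconv : ConvexOn ℝ (Set.Ioi (0 : ℝ) ×ˢ (Set.univ : Set ℝ)) h := by
    refine ⟨hconvs, ?_⟩
    rintro ⟨ρ₁, S₁⟩ hx ⟨ρ₂, S₂⟩ hy a b ha hb hab
    have hρ₁ : (0:ℝ) < ρ₁ := hx.1
    have hρ₂ : (0:ℝ) < ρ₂ := hy.1
    have hρ : (0:ℝ) < a * ρ₁ + b * ρ₂ := by
      rcases eq_or_lt_of_le ha with h0 | h0
      · simp [← h0] at hab ⊢; nlinarith
      · nlinarith
    set ρ := a * ρ₁ + b * ρ₂ with hρdef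
    set l₁ := a * ρ₁ / ρ with hl₁
    set l₂ := b * ρ₂ / ρ with hl₂
    have hl₁0 : 0 ≤ l₁ := by positivity
    have hl₂0 : 0 ≤ l₂ := by positivity
    have hlsum : l₁ + l₂ = 1 := by
      rw [hl₁, hl₂]; field_simp; exact hρdef.symm
    set u₁ := (γ - 1) * S₁ / (cV * ρ₁) / γ with hu₁
    set u₂ := (γ - 1) * S₂ / (cV * ρ₂) / γ with hu₂
    have key : (γ - 1) * (a * S₁ + b * S₂) / (cV * ρ) / γ = l₁ * u₁ + l₂ * u₂ := by
      rw [hl₁, hl₂, hu₁, hu₂]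
      field_simp
    have hexp : Real.exp (l₁ * u₁ + l₂ * u₂) ≤ l₁ * Real.exp u₁ + l₂ * Real.exp u₂ :=
      convexOn_exp.2 (Set.mem_univ u₁) (Set.mem_univ u₂) hl₁0 hl₂0 hlsum
    have : h (a • (ρ₁, S₁) + b • (ρ₂, S₂)) = ρ * Real.exp (l₁ * u₁ + l₂ * u₂) := by
      simp only [hh, Prod.smul_mk, Prod.mk_add_mk, smul_eq_mul]
      rw [← key]
    rw [this]
    have : ρ * (l₁ * Real.exp u₁ + l₂ * Real.exp u₂)
        = a * (ρ₁ * Real.exp u₁) + b * (ρ₂ * Real.exp u₂) := by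
      rw [hl₁, hl₂]; field_simp
    calc ρ * Real.exp (l₁ * u₁ + l₂ * u₂)
        ≤ ρ * (l₁ * Real.exp u₁ + l₂ * Real.exp u₂) := by
          exact mul_le_mul_of_nonneg_left hexp hρ.le
      _ = a * h (ρ₁, S₁) + b * h (ρ₂, S₂) := by rw [this]
  -- f = h ^ γ on the set
  have hfeq : ∀ q ∈ Set.Ioi (0 : ℝ) ×ˢ (Set.univ : Set ℝ),
      q.1 ^ γ * Real.exp ((γ - 1) * q.2 / (cV * q.1)) = h q ^ γ := by
    rintro ⟨ρ, S⟩ hq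
    have hρ : (0:ℝ) < ρ := hq.1
    simp only [hh]
    rw [Real.mul_rpow hρ.le (Real.exp_pos _).le, ← Real.exp_mul,
      div_mul_cancel₀ _ (ne_of_gt hγ0)]
  -- conclude
  refine ⟨hconvs, ?_⟩
  intro x hx y hy a b ha hb hab
  have hxy := hconvs hx hy ha hb hab
  dsimp only
  rw [hfeq _ hxy, hfeq _ hx, hfeq _ hy]
  have hhx : 0 ≤ h x := by
    have h1 : 0 < x.1 := hx.1; simp only [hh]; positivity
  have hhy : 0 ≤ h y := by
    have h1 : 0 < y.1 := hy.1; simp only [hh]; positivity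
  calc h (a • x + b • y) ^ γ ≤ (a * h x + b * h y) ^ γ := by
        apply Real.rpow_le_rpow _ (hconv.2 hx hy ha hb hab) hγ0.le
        have h1 : 0 < (a • x + b • y).1 := hxy.1; simp only [hh]; positivity
    _ = (a • h x + b • h y) ^ γ := by simp [smul_eq_mul]
    _ ≤ a • (h x ^ γ) + b • (h y ^ γ) :=
        (convexOn_rpow hγ.le).2 hhx hhy ha hb hab
    _ = a * h x ^ γ + b * h y ^ γ := by simp [smul_eq_mul]
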